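/- Let A be a strong M-tensor of order m and dimension n (m ≥ 2), and let b ∈ ℝ^n with b ≥ 0. Then the tensor complementarity problem TCP(A,b) is feasible, i.e., there exists x ∈ ℝ^n with x ≥ 0 and A x^{m-1} − b ≥ 0 (indeed there exists x ≥ 0 with A x^{m-1} = b). -/

import Mathlib

/-- `(A x^{m-1})_i = ∑_{i₂,…,i_m} a_{i i₂ … i_m} x_{i₂} ⋯ x_{i_m}` (real vectors). -/
def tApply {n k : ℕ} (A : Fin n → (Fin k → Fin n) → ℝ) (x : Fin n → ℝ) : Fin n → ℝ :=
  fun i => ∑ j : Fin k → Fin n, A i j * ∏ t, x (j t)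

/-- `λ ∈ ℂ` is an eigenvalue of the order-`k+1` tensor `B` if `B x^{k} = λ x^{[k]}`
for some nonzero complex vector `x`, i.e. `(B x^k)_i = λ x_i^k` for all `i`. -/
def IsEigenvalue {n k : ℕ} (B : Fin n → (Fin k → Fin n) → ℝ) (lam : ℂ) : Prop :=
  ∃ x : Fin n → ℂ, x ≠ 0 ∧
    ∀ i, (∑ j : Fin k → Fin n, (B i j : ℂ) * ∏ t, x (j t)) = lam * x i ^ k

/-- `A` is a strong M-tensor: `A = s I - B` with `B ≥ 0`, `s > 0`, and `|λ| < s` for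
every eigenvalue `λ` of `B`; here `I` is the identity tensor. -/
def IsStrongMTensor {n k : ℕ} (A : Fin n → (Fin k → Fin n) → ℝ) : Prop :=
  ∃ (s : ℝ) (B : Fin n → (Fin k → Fin n) → ℝ),
    0 < s ∧ (∀ i j, 0 ≤ B i j) ∧
    (∀ lam : ℂ, IsEigenvalue B lam → ‖lam‖ < s) ∧
    (∀ i j, A i j = s * (if ∀ t, j t = i then (1 : ℝ) else 0) - B i j)


noncomputable section AuxMTensorProof

open Finset Filter Topology

/-- auxiliary: apply a nonnegative tensor to a vector -/
def Bapp (B : Fin n → (Fin k → Fin n) → ℝ) (x : Fin n → ℝ) (i : Fin n) : ℝ :=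
  ∑ j : Fin k → Fin n, B i j * ∏ t, x (j t)

lemma Bapp_nonneg {B : Fin n → (Fin k → Fin n) → ℝ} (hB : ∀ i j, 0 ≤ B i j)
    {x : Fin n → ℝ} (hx : ∀ i, 0 ≤ x i) (i : Fin n) : 0 ≤ Bapp B x i :=
  Finset.sum_nonneg fun j _ => mul_nonneg (hB i j) (Finset.prod_nonneg fun t _ => hx _)

lemma Bapp_mono {B : Fin n → (Fin k → Fin n) → ℝ} (hB : ∀ i j, 0 ≤ B i j)
    {x y : Fin n → ℝ} (hx : ∀ i, 0 ≤ x i) (hxy : ∀ i, x i ≤ y i) (i : Fin n) :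
    Bapp B x i ≤ Bapp B y i :=
  Finset.sum_le_sum fun j _ => mul_le_mul_of_nonneg_left
    (Finset.prod_le_prod (fun t _ => hx _) (fun t _ => hxy _)) (hB i j)

lemma Bapp_le_Bapp {B B' : Fin n → (Fin k → Fin n) → ℝ} (hBB : ∀ i j, B i j ≤ B' i j)
    {x : Fin n → ℝ} (hx : ∀ i, 0 ≤ x i) (i : Fin n) : Bapp B x i ≤ Bapp B' x i :=
  Finset.sum_le_sum fun j _ => mul_le_mul_of_nonneg_right (hBB i j)
    (Finset.prod_nonneg fun t _ => hx _)

lemma Bapp_smul (B : Fin n → (Fin k → Fin n) → ℝ) (c : ℝ) (x : Fin n → ℝ) (i : Fin n) :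
    Bapp B (fun t => c * x t) i = c ^ k * Bapp B x i := by
  unfold Bapp
  rw [Finset.mul_sum]
  refine Finset.sum_congr rfl fun j _ => ?_
  rw [Finset.prod_mul_distrib, Finset.prod_const, Finset.card_univ, Fintype.card_fin]
  ring

lemma Bapp_continuous (B : Fin n → (Fin k → Fin n) → ℝ) (i : Fin n) :
    Continuous fun x : Fin n → ℝ => Bapp B x i :=
  continuous_finset_sum _ fun j _ => continuous_const.mul
    (continuous_finset_prod _ fun t _ => continuous_apply _)

lemma Bapp_add_const (B : Fin n → (Fin k → Fin n) → ℝ) (c : ℝ) (x : Fin n → ℝ) (i : Fin n) :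
    Bapp (fun i j => B i j + c) x i = Bapp B x i + c * ∑ j : Fin k → Fin n, ∏ t, x (j t) := by
  unfold Bapp
  rw [Finset.mul_sum, ← Finset.sum_add_distrib]
  exact Finset.sum_congr rfl fun j _ => by ring

lemma Bapp_pos {B : Fin n → (Fin k → Fin n) → ℝ} (hB : ∀ i j, 0 < B i j)
    {x : Fin n → ℝ} (hx : ∀ i, 0 ≤ x i) {i₀ : Fin n} (hx0 : 0 < x i₀) (i : Fin n) :
    0 < Bapp B x i := by
  refine Finset.sum_pos' (fun j _ => mul_nonneg (hB i j).le
    (Finset.prod_nonneg fun t _ => hx _)) ⟨fun _ => i₀, Finset.mem_univ _, ?_⟩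
  exact mul_pos (hB i _) (Finset.prod_pos fun t _ => hx0)


lemma pf_pos (hk : k ≠ 0) [NeZero n] {B : Fin n → (Fin k → Fin n) → ℝ}
    (hB : ∀ i j, 0 < B i j) :
    ∃ (t : ℝ) (x : Fin n → ℝ), 0 < t ∧ (∀ i, 0 < x i) ∧ (∀ i, x i ≤ 1) ∧ (∃ i, x i = 1) ∧
      ∀ i, Bapp B x i = t * x i ^ k := by
  have hne : Nonempty (Fin n) := Fin.pos_iff_nonempty.mp (Nat.pos_of_ne_zero (NeZero.ne n))
  set R : ℝ := ∑ i, ∑ j, B i j with hR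
  set K : Set (Fin n → ℝ) := Set.Icc 0 1 ∩ (⋃ i, {y | y i = 1}) with hK
  set S : Set (ℝ × (Fin n → ℝ)) :=
    (Set.Icc 0 R ×ˢ K) ∩ {p | ∀ i, p.1 * p.2 i ^ k ≤ Bapp B p.2 i} with hS
  -- any valid pair has t ≤ R
  have hvalid : ∀ t : ℝ, ∀ y ∈ K, (∀ i, t * y i ^ k ≤ Bapp B y i) → t ≤ R := by
    rintro t y ⟨⟨hy0, hy1⟩, hyU⟩ hty
    obtain ⟨i₀, hi₀⟩ := Set.mem_iUnion.mp hyU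
    have h1 : t = t * y i₀ ^ k := by rw [hi₀]; simp
    have h2 : Bapp B y i₀ ≤ ∑ j, B i₀ j := by
      refine Finset.sum_le_sum fun j _ => ?_
      have : ∏ t, y (j t) ≤ 1 :=
        Finset.prod_le_one (fun t _ => hy0 (j t)) (fun t _ => hy1 (j t))
      calc B i₀ j * ∏ t, y (j t) ≤ B i₀ j * 1 :=
            mul_le_mul_of_nonneg_left this (hB i₀ j).le
        _ = B i₀ j := mul_one _
    have h3 : ∑ j, B i₀ j ≤ R := by
      refine Finset.single_le_sum (f := fun i => ∑ j, B i j) (fun i _ => ?_) (Finset.mem_univ i₀)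
      exact Finset.sum_nonneg fun j _ => (hB i j).le
    calc t = t * y i₀ ^ k := h1
      _ ≤ Bapp B y i₀ := hty i₀
      _ ≤ R := h2.trans h3
  have hKmem : ∀ y : Fin n → ℝ, (∀ i, 0 ≤ y i) → (∀ i, y i ≤ 1) → (∃ i, y i = 1) → y ∈ K := by
    rintro y h0 h1 ⟨i, hi⟩
    exact ⟨⟨fun i => h0 i, fun i => h1 i⟩, Set.mem_iUnion.mpr ⟨i, hi⟩⟩
  -- compactness
  have hKcl : IsClosed K := by
    refine (isClosed_Icc).inter (isClosed_iUnion_of_finite fun i => ?_)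
    exact isClosed_eq (continuous_apply i) continuous_const
  have hScompact : IsCompact S := by
    refine ((isCompact_Icc.prod (isCompact_Icc.inter_right ?_)).inter_right ?_)
    · exact isClosed_iUnion_of_finite fun i =>
        isClosed_eq (continuous_apply i) continuous_const
    · have : {p : ℝ × (Fin n → ℝ) | ∀ i, p.1 * p.2 i ^ k ≤ Bapp B p.2 i}
          = ⋂ i, {p : ℝ × (Fin n → ℝ) | p.1 * p.2 i ^ k ≤ Bapp B p.2 i} := by
        ext p; simp
      rw [this]
      refine isClosed_iInter fun i => isClosed_le ?_ ?_
      · exact continuous_fst.mul (((continuous_apply i).comp continuous_snd).pow k)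
      · exact (Bapp_continuous B i).comp continuous_snd
  -- the base point
  have hnek : Nonempty (Fin k → Fin n) := ⟨fun _ => Classical.arbitrary _⟩
  set t₀ : ℝ := Finset.univ.inf' Finset.univ_nonempty (fun i => ∑ j, B i j) with ht₀
  have ht₀pos : 0 < t₀ := by
    rw [Finset.lt_inf'_iff]
    exact fun i _ => Finset.sum_pos (fun j _ => hB i j) Finset.univ_nonempty
  have hone : ((t₀, fun _ => (1:ℝ)) : ℝ × (Fin n → ℝ)) ∈ S := by
    have hKone : (fun _ => (1:ℝ)) ∈ K :=
      hKmem _ (fun i => zero_le_one) (fun i => le_refl _) ⟨Classical.arbitrary _, rfl⟩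
    have hcond : ∀ i, t₀ * (1:ℝ) ^ k ≤ Bapp B (fun _ => 1) i := by
      intro i
      have : Bapp B (fun _ => (1:ℝ)) i = ∑ j, B i j := by
        unfold Bapp; exact Finset.sum_congr rfl fun j _ => by simp
      rw [this, one_pow, mul_one]
      exact Finset.inf'_le _ (Finset.mem_univ i)
    refine ⟨⟨⟨ht₀pos.le, ?_⟩, hKone⟩, hcond⟩
    exact hvalid t₀ _ hKone hcond
  obtain ⟨p, hpS, hmax⟩ := hScompact.exists_isMaxOn ⟨_, hone⟩ continuous_fst.continuousOn
  obtain ⟨⟨⟨hpt0, hptR⟩, hpK⟩, hpcond⟩ := hpS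
  set ts := p.1 with hts
  set ys := p.2 with hys
  have htspos : 0 < ts := lt_of_lt_of_le ht₀pos (hmax hone)
  have hys0 : ∀ i, 0 ≤ ys i := fun i => hpK.1.1 i
  obtain ⟨iy, hiy⟩ := Set.mem_iUnion.mp hpK.2
  -- the iterate x = G ys
  have hBys : ∀ i, 0 < Bapp B ys i := fun i => Bapp_pos hB hys0 (hiy ▸ one_pos) i
  set x : Fin n → ℝ := fun i => (Bapp B ys i / ts) ^ ((k:ℝ)⁻¹) with hx
  have hx0 : ∀ i, 0 < x i := fun i => Real.rpow_pos_of_pos (div_pos (hBys i) htspos) _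
  have hxpow : ∀ i, x i ^ k = Bapp B ys i / ts := fun i =>
    Real.rpow_inv_natCast_pow (div_pos (hBys i) htspos).le hk
  have hxeq : ∀ i, ts * x i ^ k = Bapp B ys i := by
    intro i; rw [hxpow, mul_div_cancel₀ _ htspos.ne']
  have hyx : ∀ i, ys i ≤ x i := by
    intro i
    refine le_of_pow_le_pow_left₀ hk (hx0 i).le ?_
    rw [hxpow, le_div_iff₀ htspos]
    calc ys i ^ k * ts = ts * ys i ^ k := mul_comm _ _
      _ ≤ Bapp B ys i := hpcond i
  have hge : ∀ i, ts * x i ^ k ≤ Bapp B x i := by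
    intro i; rw [hxeq]; exact Bapp_mono (fun i j => (hB i j).le) hys0 hyx i
  by_cases heq : ∀ i, Bapp B x i = ts * x i ^ k
  · -- equality case: normalize x
    set M : ℝ := Finset.univ.sup' Finset.univ_nonempty x with hM
    obtain ⟨i₁, _, hi₁⟩ := Finset.exists_mem_eq_sup' Finset.univ_nonempty x
    have hxM : ∀ i, x i ≤ M := fun i => Finset.le_sup' x (Finset.mem_univ i)
    have hxiM : x i₁ = M := (hM.trans hi₁).symm
    have hMpos : 0 < M := hxiM ▸ hx0 i₁
    refine ⟨ts, fun i => M⁻¹ * x i, htspos, ?_, ?_, ⟨i₁, ?_⟩, ?_⟩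
    · exact fun i => mul_pos (inv_pos.mpr hMpos) (hx0 i)
    · intro i
      rw [inv_mul_le_one₀ hMpos]
      exact hxM i
    · show M⁻¹ * x i₁ = 1
      rw [hxiM, inv_mul_cancel₀ hMpos.ne']
    · intro i
      rw [Bapp_smul, heq i, mul_pow]
      ring
  · push_neg at heq
    obtain ⟨i₀, hne0⟩ := heq
    have hstrict : ts * x i₀ ^ k < Bapp B x i₀ := lt_of_le_of_ne (hge i₀) (Ne.symm hne0)
    exfalso
    -- z = G x
    have hBx : ∀ i, 0 < Bapp B x i := fun i => Bapp_pos hB (fun i => (hx0 i).le) (hx0 i₀) i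
    set z : Fin n → ℝ := fun i => (Bapp B x i / ts) ^ ((k:ℝ)⁻¹) with hz
    have hz0 : ∀ i, 0 < z i := fun i => Real.rpow_pos_of_pos (div_pos (hBx i) htspos) _
    have hzpow : ∀ i, z i ^ k = Bapp B x i / ts := fun i =>
      Real.rpow_inv_natCast_pow (div_pos (hBx i) htspos).le hk
    have hzeq : ∀ i, ts * z i ^ k = Bapp B x i := by
      intro i; rw [hzpow, mul_div_cancel₀ _ htspos.ne']
    have hxz : ∀ i, x i ≤ z i := by
      intro i
      refine le_of_pow_le_pow_left₀ hk (hz0 i).le ?_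
      rw [hzpow, le_div_iff₀ htspos, mul_comm]
      exact hge i
    have hxzi₀ : x i₀ < z i₀ := by
      refine lt_of_pow_lt_pow_left₀ k (hz0 i₀).le ?_
      rw [hzpow, lt_div_iff₀ htspos, mul_comm]
      exact hstrict
    -- strict inequality everywhere for z
    have hstrictall : ∀ i, ts * z i ^ k < Bapp B z i := by
      intro i
      rw [hzeq]
      have hkey : Bapp B x i + B i (fun _ => i₀) * (z i₀ ^ k - x i₀ ^ k) ≤ Bapp B z i := by
        have hrw : Bapp B x i + B i (fun _ => i₀) * (z i₀ ^ k - x i₀ ^ k)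
            = ∑ j : Fin k → Fin n, (B i j * ∏ t, x (j t)
              + if j = (fun _ => i₀) then B i (fun _ => i₀) * (z i₀ ^ k - x i₀ ^ k) else 0) := by
          rw [Finset.sum_add_distrib, Finset.sum_ite_eq' Finset.univ (fun _ => i₀)
            (fun _ => B i (fun _ => i₀) * (z i₀ ^ k - x i₀ ^ k)), if_pos (Finset.mem_univ _)]
          rfl
        rw [hrw]
        refine Finset.sum_le_sum fun j _ => ?_
        by_cases hj : j = (fun _ => i₀)
        · subst hj
          simp only [if_pos rfl, if_true, Finset.prod_const, Finset.card_univ, Fintype.card_fin]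
          have : B i (fun _ => i₀) * x i₀ ^ k + B i (fun _ => i₀) * (z i₀ ^ k - x i₀ ^ k)
              = B i (fun _ => i₀) * z i₀ ^ k := by ring
          linarith
        · rw [if_neg hj, add_zero]
          exact mul_le_mul_of_nonneg_left
            (Finset.prod_le_prod (fun t _ => (hx0 _).le) (fun t _ => hxz _)) (hB i j).le
      have hgain : 0 < B i (fun _ => i₀) * (z i₀ ^ k - x i₀ ^ k) :=
        mul_pos (hB i _) (sub_pos.mpr (pow_lt_pow_left₀ hxzi₀ (hx0 i₀).le hk))
      linarith
    -- build a better pair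
    set δ : ℝ := Finset.univ.inf' Finset.univ_nonempty
      (fun i => (Bapp B z i - ts * z i ^ k) / z i ^ k) with hδ
    have hδpos : 0 < δ := by
      rw [Finset.lt_inf'_iff]
      exact fun i _ => div_pos (sub_pos.mpr (hstrictall i)) (pow_pos (hz0 i) k)
    have hcondz : ∀ i, (ts + δ) * z i ^ k ≤ Bapp B z i := by
      intro i
      have h1 : δ ≤ (Bapp B z i - ts * z i ^ k) / z i ^ k :=
        Finset.inf'_le _ (Finset.mem_univ i)
      have h2 : δ * z i ^ k ≤ Bapp B z i - ts * z i ^ k := by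
        rw [← div_mul_cancel₀ (Bapp B z i - ts * z i ^ k) (pow_pos (hz0 i) k).ne']
        exact mul_le_mul_of_nonneg_right h1 (pow_pos (hz0 i) k).le
      nlinarith [pow_pos (hz0 i) k]
    -- normalize z
    set M : ℝ := Finset.univ.sup' Finset.univ_nonempty z with hM
    obtain ⟨i₁, _, hi₁⟩ := Finset.exists_mem_eq_sup' Finset.univ_nonempty z
    have hzM : ∀ i, z i ≤ M := fun i => Finset.le_sup' z (Finset.mem_univ i)
    have hziM : z i₁ = M := (hM.trans hi₁).symm
    have hMpos : 0 < M := hziM ▸ hz0 i₁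
    set w : Fin n → ℝ := fun i => M⁻¹ * z i with hw
    have hwK : w ∈ K := by
      refine hKmem _ (fun i => mul_nonneg (inv_pos.mpr hMpos).le (hz0 i).le)
        (fun i => ?_) ⟨i₁, ?_⟩
      · rw [inv_mul_le_one₀ hMpos]
        exact hzM i
      · show M⁻¹ * z i₁ = 1
        rw [hziM, inv_mul_cancel₀ hMpos.ne']
    have hwcond : ∀ i, (ts + δ) * w i ^ k ≤ Bapp B w i := by
      intro i
      rw [hw]
      show (ts + δ) * (M⁻¹ * z i) ^ k ≤ Bapp B (fun t => M⁻¹ * z t) i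
      rw [Bapp_smul, mul_pow]
      calc (ts + δ) * ((M⁻¹) ^ k * z i ^ k) = (M⁻¹) ^ k * ((ts + δ) * z i ^ k) := by ring
        _ ≤ (M⁻¹) ^ k * Bapp B z i :=
          mul_le_mul_of_nonneg_left (hcondz i) (pow_nonneg (inv_pos.mpr hMpos).le k)
    have hmem : ((ts + δ, w) : ℝ × (Fin n → ℝ)) ∈ S := by
      refine ⟨⟨⟨by positivity, hvalid _ _ hwK hwcond⟩, hwK⟩, hwcond⟩
    have h2 : ts + δ ≤ ts := hmax hmem
    linarith

lemma exists_subsolution {n k : ℕ} (hk : k ≠ 0) [NeZero n] {s : ℝ} (hs : 0 < s)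
    {B : Fin n → (Fin k → Fin n) → ℝ} (hB : ∀ i j, 0 ≤ B i j)
    (hspec : ∀ lam : ℂ, IsEigenvalue B lam → ‖lam‖ < s) :
    ∃ v : Fin n → ℝ, (∀ i, 0 < v i) ∧ ∀ i, Bapp B v i < s * v i ^ k := by
  have hne : Nonempty (Fin n) := Fin.pos_iff_nonempty.mp (Nat.pos_of_ne_zero (NeZero.ne n))
  set Bm : ℕ → Fin n → (Fin k → Fin n) → ℝ := fun m i j => B i j + 1 / (m + 1) with hBm
  have hBmpos : ∀ m i j, 0 < Bm m i j := fun m i j => by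
    have : (0:ℝ) < 1 / (m + 1) := by positivity
    have := hB i j; simp only [hBm]; linarith
  have H : ∀ m : ℕ, ∃ (t : ℝ) (x : Fin n → ℝ), 0 < t ∧ (∀ i, 0 < x i) ∧ (∀ i, x i ≤ 1)
      ∧ (∃ i, x i = 1) ∧ ∀ i, Bapp (Bm m) x i = t * x i ^ k :=
    fun m => pf_pos hk (hBmpos m)
  choose t x ht hx0 hx1 hxone heq using H
  by_cases hc : ∃ m, t m < s
  · obtain ⟨m, hm⟩ := hc
    refine ⟨x m, hx0 m, fun i => ?_⟩
    have h1 : Bapp B (x m) i ≤ Bapp (Bm m) (x m) i := by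
      refine Bapp_le_Bapp (fun i j => ?_) (fun i => (hx0 m i).le) i
      have : (0:ℝ) < 1 / (m + 1) := by positivity
      simp only [hBm]; linarith
    calc Bapp B (x m) i ≤ Bapp (Bm m) (x m) i := h1
      _ = t m * x m i ^ k := heq m i
      _ < s * x m i ^ k := by
          exact mul_lt_mul_of_pos_right hm (pow_pos (hx0 m i) k)
  · push_neg at hc
    exfalso
    -- uniform upper bound on t m
    set C : ℝ := ∑ i, ∑ j : Fin k → Fin n, (B i j + 1) with hC
    have htC : ∀ m, t m ≤ C := by
      intro m
      obtain ⟨i₀, hi₀⟩ := hxone m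
      have h1 : t m = t m * x m i₀ ^ k := by rw [hi₀]; simp
      have h2 : Bapp (Bm m) (x m) i₀ ≤ ∑ j : Fin k → Fin n, (B i₀ j + 1) := by
        refine Finset.sum_le_sum fun j _ => ?_
        have hp : ∏ t', x m (j t') ≤ 1 :=
          Finset.prod_le_one (fun t' _ => (hx0 m (j t')).le) (fun t' _ => hx1 m (j t'))
        have hp0 : 0 ≤ ∏ t', x m (j t') := Finset.prod_nonneg fun t' _ => (hx0 m (j t')).le
        have hBm1 : Bm m i₀ j ≤ B i₀ j + 1 := by
          have h3 : (1:ℝ) / (m + 1) ≤ 1 := by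
            rw [div_le_one (by positivity)]; linarith [Nat.cast_nonneg (α := ℝ) m]
          simp only [hBm]; linarith
        calc Bm m i₀ j * ∏ t', x m (j t') ≤ (B i₀ j + 1) * 1 := by
              refine mul_le_mul hBm1 hp hp0 ?_
              linarith [hB i₀ j]
          _ = B i₀ j + 1 := mul_one _
      have h3 : ∑ j : Fin k → Fin n, (B i₀ j + 1) ≤ C := by
        refine Finset.single_le_sum (f := fun i => ∑ j : Fin k → Fin n, (B i j + 1))
          (fun i _ => Finset.sum_nonneg fun j _ => by linarith [hB i j]) (Finset.mem_univ i₀)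
      calc t m = t m * x m i₀ ^ k := h1
        _ = Bapp (Bm m) (x m) i₀ := (heq m i₀).symm
        _ ≤ C := h2.trans h3
    -- compact set containing the sequence
    set K : Set (ℝ × (Fin n → ℝ)) :=
      Set.Icc s C ×ˢ (Set.Icc 0 1 ∩ ⋃ i, {y : Fin n → ℝ | y i = 1}) with hKdef
    have hKcompact : IsCompact K := by
      refine isCompact_Icc.prod (isCompact_Icc.inter_right ?_)
      exact isClosed_iUnion_of_finite fun i => isClosed_eq (continuous_apply i) continuous_const
    have hmemK : ∀ m, (t m, x m) ∈ K := by
      intro m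
      refine ⟨⟨hc m, htC m⟩, ⟨fun i => (hx0 m i).le, fun i => hx1 m i⟩, ?_⟩
      obtain ⟨i₀, hi₀⟩ := hxone m
      exact Set.mem_iUnion.mpr ⟨i₀, hi₀⟩
    obtain ⟨⟨tl, xl⟩, hlK, φ, hφ, hconv⟩ := hKcompact.tendsto_subseq hmemK
    have htl : Tendsto (fun m => t (φ m)) atTop (𝓝 tl) :=
      (continuous_fst.tendsto _).comp hconv
    have hxl : Tendsto (fun m => x (φ m)) atTop (𝓝 xl) :=
      (continuous_snd.tendsto _).comp hconv
    have hε : Tendsto (fun m => (1:ℝ) / (φ m + 1)) atTop (𝓝 0) :=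
      tendsto_one_div_add_atTop_nhds_zero_nat.comp hφ.tendsto_atTop
    -- limit equation
    have hleq : ∀ i, Bapp B xl i = tl * xl i ^ k := by
      intro i
      have h1 : Tendsto (fun m => Bapp (Bm (φ m)) (x (φ m)) i - t (φ m) * x (φ m) i ^ k)
          atTop (𝓝 (Bapp B xl i - tl * xl i ^ k)) := by
        have hBpart : Tendsto (fun m => Bapp (Bm (φ m)) (x (φ m)) i) atTop (𝓝 (Bapp B xl i)) := by
          have hrw : ∀ m, Bapp (Bm (φ m)) (x (φ m)) i
              = Bapp B (x (φ m)) i + (1 / (φ m + 1)) * ∑ j : Fin k → Fin n, ∏ t', x (φ m) (j t') :=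
            fun m => Bapp_add_const B _ _ i
          simp only [hrw]
          have hP : Continuous fun y : Fin n → ℝ => ∑ j : Fin k → Fin n, ∏ t', y (j t') :=
            continuous_finset_sum _ fun j _ =>
              continuous_finset_prod _ fun t' _ => continuous_apply _
          have := (((Bapp_continuous B i).tendsto xl).comp hxl).add
            (hε.mul ((hP.tendsto xl).comp hxl))
          simpa using this
        have hxi : Tendsto (fun m => x (φ m) i) atTop (𝓝 (xl i)) :=
          ((continuous_apply i).tendsto xl).comp hxl
        exact hBpart.sub (htl.mul (hxi.pow k))
      have h2 : ∀ m, Bapp (Bm (φ m)) (x (φ m)) i - t (φ m) * x (φ m) i ^ k = 0 :=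
        fun m => by rw [heq (φ m) i, sub_self]
      have h3 : Tendsto (fun _ : ℕ => (0:ℝ)) atTop (𝓝 (Bapp B xl i - tl * xl i ^ k)) := by
        simpa only [h2] using h1
      have := tendsto_nhds_unique h3 tendsto_const_nhds
      linarith [this]
    -- xl is an eigenvector with eigenvalue tl ≥ s
    obtain ⟨⟨htl1, _⟩, ⟨hxl0, _⟩, hxlU⟩ := hlK
    obtain ⟨i₀, hi₀⟩ := Set.mem_iUnion.mp hxlU
    have hi₀' : xl i₀ = 1 := hi₀
    have heig : IsEigenvalue B (tl : ℂ) := by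
      refine ⟨fun i => (xl i : ℂ), ?_, fun i => ?_⟩
      · intro h
        have := congrFun h i₀
        simp only [Pi.zero_apply] at this
        rw [hi₀'] at this
        norm_num at this
      · have := hleq i
        push_cast
        exact_mod_cast congrArg (fun r : ℝ => (r : ℂ)) this
    have := hspec _ heig
    rw [Complex.norm_real, Real.norm_eq_abs] at this
    have : tl < s := lt_of_abs_lt this
    linarith

lemma solve_eq {n k : ℕ} (hk : k ≠ 0) [NeZero n] {s : ℝ} (hs : 0 < s)
    {B : Fin n → (Fin k → Fin n) → ℝ} (hB : ∀ i j, 0 ≤ B i j)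
    {v : Fin n → ℝ} (hv0 : ∀ i, 0 < v i) (hv : ∀ i, Bapp B v i < s * v i ^ k)
    (b : Fin n → ℝ) (hb : ∀ i, 0 ≤ b i) :
    ∃ x : Fin n → ℝ, (∀ i, 0 ≤ x i) ∧ ∀ i, s * x i ^ k = b i + Bapp B x i := by
  have hne : Nonempty (Fin n) := Fin.pos_iff_nonempty.mp (Nat.pos_of_ne_zero (NeZero.ne n))
  -- scale v to dominate b
  set g : Fin n → ℝ := fun i => s * v i ^ k - Bapp B v i with hg
  have hgpos : ∀ i, 0 < g i := fun i => sub_pos.mpr (hv i)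
  set c : ℝ := max 1 (Finset.univ.sup' Finset.univ_nonempty (fun i => b i / g i)) with hc
  have hc1 : (1:ℝ) ≤ c := le_max_left _ _
  have hcpos : 0 < c := lt_of_lt_of_le one_pos hc1
  have hcb : ∀ i, b i ≤ c ^ k * g i := by
    intro i
    have h1 : b i / g i ≤ c :=
      le_trans (Finset.le_sup' (fun i => b i / g i) (Finset.mem_univ i)) (le_max_right _ _)
    have h2 : b i ≤ c * g i := by
      rw [div_le_iff₀ (hgpos i)] at h1; linarith
    have h3 : c ≤ c ^ k := le_self_pow₀ hc1 hk
    nlinarith [hgpos i]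
  set w : Fin n → ℝ := fun i => c * v i with hw
  have hw0 : ∀ i, 0 < w i := fun i => mul_pos hcpos (hv0 i)
  have hub : ∀ i, b i + Bapp B w i ≤ s * w i ^ k := by
    intro i
    have h1 : Bapp B w i = c ^ k * Bapp B v i := Bapp_smul B c v i
    have h2 : s * w i ^ k = c ^ k * (s * v i ^ k) := by
      show s * (c * v i) ^ k = _
      rw [mul_pow]; ring
    have h3 := hcb i
    have h4 : c ^ k * Bapp B v i + c ^ k * g i = c ^ k * (s * v i ^ k) := by
      simp only [hg]; ring
    rw [h1, h2]; linarith
  -- the set for the supremum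
  set S : Set (Fin n → ℝ) := {x | (∀ i, 0 ≤ x i) ∧ (∀ i, x i ≤ w i)
    ∧ ∀ i, s * x i ^ k ≤ b i + Bapp B x i} with hSdef
  have h0S : (fun _ => (0:ℝ)) ∈ S := by
    refine ⟨fun i => le_refl _, fun i => (hw0 i).le, fun i => ?_⟩
    rw [zero_pow hk, mul_zero]
    exact add_nonneg (hb i) (Bapp_nonneg hB (fun _ => le_refl _) i)
  set xs : Fin n → ℝ := fun i => sSup ((fun x : Fin n → ℝ => x i) '' S) with hxs
  have hbdd : ∀ i, BddAbove ((fun x : Fin n → ℝ => x i) '' S) := by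
    intro i
    refine ⟨w i, ?_⟩
    rintro _ ⟨x, hx, rfl⟩
    exact hx.2.1 i
  have hle : ∀ x ∈ S, ∀ i, x i ≤ xs i := fun x hx i =>
    le_csSup (hbdd i) (Set.mem_image_of_mem _ hx)
  have hxsw : ∀ i, xs i ≤ w i := by
    intro i
    refine csSup_le ⟨0, Set.mem_image_of_mem _ h0S⟩ ?_
    rintro _ ⟨x, hx, rfl⟩
    exact hx.2.1 i
  have hxs0 : ∀ i, 0 ≤ xs i := fun i => hle _ h0S i
  -- the improved point ys
  have harg : ∀ i, 0 ≤ (b i + Bapp B xs i) / s :=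
    fun i => div_nonneg (add_nonneg (hb i) (Bapp_nonneg hB hxs0 i)) hs.le
  set ys : Fin n → ℝ := fun i => ((b i + Bapp B xs i) / s) ^ ((k:ℝ)⁻¹) with hys
  have hys0 : ∀ i, 0 ≤ ys i := fun i => Real.rpow_nonneg (harg i) _
  have hyspow : ∀ i, ys i ^ k = (b i + Bapp B xs i) / s := fun i =>
    Real.rpow_inv_natCast_pow (harg i) hk
  have hyseq : ∀ i, s * ys i ^ k = b i + Bapp B xs i := by
    intro i; rw [hyspow, mul_div_cancel₀ _ hs.ne']
  -- every element of S is below ys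
  have hSys : ∀ x ∈ S, ∀ i, x i ≤ ys i := by
    rintro x ⟨hx0, hxw, hxc⟩ i
    refine le_of_pow_le_pow_left₀ hk (hys0 i) ?_
    rw [hyspow, le_div_iff₀ hs]
    have h1 : Bapp B x i ≤ Bapp B xs i := Bapp_mono hB hx0 (hle x ⟨hx0, hxw, hxc⟩) i
    calc x i ^ k * s = s * x i ^ k := mul_comm _ _
      _ ≤ b i + Bapp B x i := hxc i
      _ ≤ b i + Bapp B xs i := by linarith
  have hxys : ∀ i, xs i ≤ ys i := by
    intro i
    refine csSup_le ⟨0, Set.mem_image_of_mem _ h0S⟩ ?_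
    rintro _ ⟨x, hx, rfl⟩
    exact hSys x hx i
  -- ys ∈ S
  have hysS : ys ∈ S := by
    refine ⟨hys0, fun i => ?_, fun i => ?_⟩
    · refine le_of_pow_le_pow_left₀ hk (hw0 i).le ?_
      rw [hyspow, div_le_iff₀ hs]
      have h1 : Bapp B xs i ≤ Bapp B w i := Bapp_mono hB hxs0 hxsw i
      calc b i + Bapp B xs i ≤ b i + Bapp B w i := by linarith
        _ ≤ s * w i ^ k := hub i
        _ = w i ^ k * s := mul_comm _ _
    · rw [hyseq i]
      have h1 : Bapp B xs i ≤ Bapp B ys i := Bapp_mono hB hxs0 hxys i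
      linarith
  have hysxs : ∀ i, ys i ≤ xs i := fun i => hle ys hysS i
  have hfix : ∀ i, xs i = ys i := fun i => le_antisymm (hxys i) (hysxs i)
  refine ⟨xs, hxs0, fun i => ?_⟩
  calc s * xs i ^ k = s * ys i ^ k := by rw [hfix i]
    _ = b i + Bapp B xs i := hyseq i

lemma tApply_decomp {n k : ℕ} {A B : Fin n → (Fin k → Fin n) → ℝ} {s : ℝ}
    (hAeq : ∀ i j, A i j = s * (if ∀ t, j t = i then (1 : ℝ) else 0) - B i j)
    (x : Fin n → ℝ) (i : Fin n) :
    tApply A x i = s * x i ^ k - Bapp B x i := by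
  unfold tApply Bapp
  have h1 : ∀ j : Fin k → Fin n, A i j * ∏ t, x (j t)
      = s * ((if j = (fun _ => i) then (1:ℝ) else 0) * ∏ t, x (j t)) - B i j * ∏ t, x (j t) := by
    intro j
    have hiff : (∀ t, j t = i) ↔ j = (fun _ => i) :=
      ⟨fun h => funext h, fun h t => congrFun h t⟩
    rw [hAeq i j]
    by_cases hj : j = (fun _ => i)
    · rw [if_pos (hiff.mpr hj), if_pos hj]; ring
    · rw [if_neg (fun h => hj (hiff.mp h)), if_neg hj]; ring
  simp only [h1]
  rw [Finset.sum_sub_distrib, ← Finset.mul_sum]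
  congr 1
  congr 1
  simp only [ite_mul, one_mul, zero_mul]
  rw [Finset.sum_ite_eq' Finset.univ ((fun _ => i) : Fin k → Fin n) (fun j => ∏ t, x (j t)),
    if_pos (Finset.mem_univ _)]
  rw [Finset.prod_const, Finset.card_univ, Fintype.card_fin]


end AuxMTensorProof

/-- For a strong M-tensor `A` and `b ≥ 0`, `TCP(A,b)` is feasible; indeed there is a
nonnegative `x` with `A x^{m-1} = b`. -/
theorem stmt7 {n m : ℕ} (hm : 2 ≤ m) (A : Fin n → (Fin (m - 1) → Fin n) → ℝ)
    (hA : IsStrongMTensor A) (b : Fin n → ℝ) (hb : ∀ i, 0 ≤ b i) :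
    ∃ x : Fin n → ℝ, (∀ i, 0 ≤ x i) ∧ (∀ i, b i ≤ tApply A x i) ∧
      ∀ i, tApply A x i = b i := by
  rcases Nat.eq_zero_or_pos n with hn | hn
  · subst hn
    exact ⟨0, fun i => i.elim0, fun i => i.elim0, fun i => i.elim0⟩
  · haveI : NeZero n := ⟨hn.ne'⟩
    have hk : m - 1 ≠ 0 := by omega
    obtain ⟨s, B, hs, hB, hspec, hAeq⟩ := hA
    obtain ⟨v, hv0, hv⟩ := exists_subsolution hk hs hB hspec
    obtain ⟨x, hx0, hxeq⟩ := solve_eq hk hs hB hv0 hv b hb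
    have hmain : ∀ i, tApply A x i = b i := by
      intro i
      rw [tApply_decomp hAeq x i]
      linarith [hxeq i]
    exact ⟨x, hx0, fun i => (hmain i).ge, hmain⟩
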